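/- In the Brown graph B(q) for an odd prime power q, every two non-adjacent vertices have exactly one common neighbor. -/

import Mathlib

/-- `G` contains no cycle of length 4 as a (not necessarily induced) subgraph. -/
def C4Free {V : Type*} (G : SimpleGraph V) : Prop :=
  ¬ ∃ a b c d : V, a ≠ b ∧ a ≠ c ∧ a ≠ d ∧ b ≠ c ∧ b ≠ d ∧ c ≠ d ∧
    G.Adj a b ∧ G.Adj b c ∧ G.Adj c d ∧ G.Adj d a

/-- `G` has edge-connectivity at least `k`: it stays connected after
deleting any set of fewer than `k` edges. -/
def EdgeConnAtLeast {V : Type*} (G : SimpleGraph V) (k : ℕ) : Prop :=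
  ∀ s : Finset (Sym2 V), s.card < k → (G.deleteEdges ↑s).Connected

/-- The Brown graph on the projective plane over `F`: vertices are classes of
nonzero vectors of `F³`, adjacency is orthogonality of representatives. -/
def brown (F : Type*) [Field F] : SimpleGraph (Projectivization F (Fin 3 → F)) where
  Adj x y := x ≠ y ∧ ∑ i, x.rep i * y.rep i = 0
  symm := ⟨fun x y h => ⟨h.1.symm, by
    rw [← h.2]; exact Finset.sum_congr rfl fun i _ => mul_comm _ _⟩⟩
  loopless := ⟨fun x h => h.1 rfl⟩

/-- A vertex of the Brown graph is quadric if its representatives are self-orthogonal. -/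
def IsQuadric {F : Type*} [Field F] (x : Projectivization F (Fin 3 → F)) : Prop :=
  ∑ i, x.rep i * x.rep i = 0

open Matrix

lemma cross_triple_aux {F : Type*} [Field F] (u v w : Fin 3 → F) :
    u ⨯₃ (v ⨯₃ w) = (u ⬝ᵥ w) • v - (u ⬝ᵥ v) • w := by
  funext i
  fin_cases i <;> simp [cross_apply, dotProduct, Fin.sum_univ_three] <;> ring

lemma cross_eq_zero_prop {F : Type*} [Field F] {u v : Fin 3 → F} (hv : v ≠ 0)
    (h : u ⨯₃ v = 0) : ∃ t : F, u = t • v := by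
  have hli : ¬ LinearIndependent F ![u, v] := fun hl => by
    exact (crossProduct_ne_zero_iff_linearIndependent.2 hl) h
  rw [linearIndependent_fin2] at hli
  push_neg at hli
  simp only [Matrix.cons_val_one, Matrix.head_cons, Matrix.cons_val_zero] at hli
  obtain ⟨t, ht⟩ := hli hv
  exact ⟨t, ht.symm⟩

lemma dot_sum {F : Type*} [Field F] (u v : Fin 3 → F) :
    ∑ i, u i * v i = u ⬝ᵥ v := rfl

theorem brown_unique_common_neighbor (F : Type*) [Field F] [Fintype F]
    (hodd : Odd (Fintype.card F))
    (x y : Projectivization F (Fin 3 → F)) (hxy : x ≠ y)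
    (hna : ¬ (brown F).Adj x y) :
    ∃! z, (brown F).Adj x z ∧ (brown F).Adj y z := by
  set a := x.rep with ha
  set b := y.rep with hb
  have hab : a ⬝ᵥ b ≠ 0 := by
    intro h
    exact hna ⟨hxy, by rw [dot_sum]; exact h⟩
  set c := a ⨯₃ b with hc
  -- c ≠ 0
  have hcne : c ≠ 0 := by
    intro h
    obtain ⟨t, ht⟩ := cross_eq_zero_prop y.rep_nonzero h
    have htne : t ≠ 0 := by
      rintro rfl
      simp at ht
      exact x.rep_nonzero ht
    have : x = y := by
      rw [← x.mk_rep, ← y.mk_rep]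
      rw [Projectivization.mk_eq_mk_iff']
      exact ⟨t, ht.symm⟩
    exact hxy this
  set z := Projectivization.mk F c hcne with hz
  have hzrep : ∃ u : F, u ≠ 0 ∧ z.rep = u • c := by
    have : Projectivization.mk F z.rep z.rep_nonzero = Projectivization.mk F c hcne := by
      rw [z.mk_rep]
    rw [Projectivization.mk_eq_mk_iff] at this
    obtain ⟨u, hu⟩ := this
    exact ⟨(u : F), u.ne_zero, hu.symm⟩
  obtain ⟨u, hune, hurep⟩ := hzrep
  have hac : a ⬝ᵥ c = 0 := dot_self_cross a b
  have hbc : b ⬝ᵥ c = 0 := dot_cross_self a b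
  have haz : a ⬝ᵥ z.rep = 0 := by
    rw [hurep, dotProduct_smul, hac, smul_zero]
  have hbz : b ⬝ᵥ z.rep = 0 := by
    rw [hurep, dotProduct_smul, hbc, smul_zero]
  have hxz : x ≠ z := by
    intro h
    have : a = u • c := by rw [ha, h]; exact hurep
    apply hab
    rw [this, smul_dotProduct]
    have : c ⬝ᵥ b = 0 := by rw [dotProduct_comm]; exact hbc
    rw [this, smul_zero]
  have hyz : y ≠ z := by
    intro h
    have : b = u • c := by rw [hb, h]; exact hurep
    apply hab
    rw [this, dotProduct_smul]
    rw [hac, smul_zero]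
  refine ⟨z, ⟨⟨hxz, by rw [dot_sum]; exact haz⟩, ⟨hyz, by rw [dot_sum]; exact hbz⟩⟩, ?_⟩
  rintro w ⟨⟨hxw, hw1⟩, ⟨hyw, hw2⟩⟩
  rw [dot_sum] at hw1 hw2
  have hcross : w.rep ⨯₃ c = 0 := by
    rw [hc, cross_triple_aux]
    rw [show w.rep ⬝ᵥ b = 0 from by rw [dotProduct_comm]; exact hw2,
        show w.rep ⬝ᵥ a = 0 from by rw [dotProduct_comm]; exact hw1]
    simp
  obtain ⟨t, ht⟩ := cross_eq_zero_prop hcne hcross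
  have htne : t ≠ 0 := by
    rintro rfl
    simp at ht
    exact w.rep_nonzero ht
  rw [← w.mk_rep, hz]
  rw [Projectivization.mk_eq_mk_iff']
  exact ⟨t, ht.symm⟩
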